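/- arXiv:1210.1956 — 6 statements merged into one kernel-verified Lean document; each statement's English description precedes it below -/
import Mathlib

section
/- Let $A_k \subset \mathbb{R} \setminus \{0\}$, $k=1,2,\ldots$, be a sequence of nonempty finite sets such that $\max A_{k+1} \le \frac{1}{4}\, d(A_k)$ for all $k$, where $d(A)$ denotes the minimal distance between two distinct points of $A$ if $\#A \ge 2$, and $d(\{x\}) = |x|$. Then whenever $x_1 + x_2 + \cdots + x_n = y_1 + y_2 + \cdots + y_n$ with $x_i, y_i \in A_i$ for each $i$, one has $x_i = y_i$ for all $i = 1, \ldots, n$. -/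
/-- Minimal gap of a finite set: min distance between distinct points if `2 ≤ card`,
and `|x|` for a singleton `{x}`. -/
noncomputable def dGap (A : Finset ℝ) : ℝ :=
  if 2 ≤ A.card then sInf {r : ℝ | ∃ x ∈ A, ∃ y ∈ A, x ≠ y ∧ r = |x - y|}
  else sInf {r : ℝ | ∃ x ∈ A, r = |x|}

/-- `max A = max_{a ∈ A} |a|`. -/
noncomputable def maxAbs (A : Finset ℝ) : ℝ := sSup {r : ℝ | ∃ x ∈ A, r = |x|}

lemma absSet_fin (A : Finset ℝ) : {r : ℝ | ∃ x ∈ A, r = |x|}.Finite := by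
  apply Set.Finite.subset (A.finite_toSet.image abs)
  rintro r ⟨x, hx, rfl⟩
  exact ⟨x, hx, rfl⟩

lemma gapSet_fin (A : Finset ℝ) :
    {r : ℝ | ∃ x ∈ A, ∃ y ∈ A, x ≠ y ∧ r = |x - y|}.Finite := by
  apply Set.Finite.subset ((A.finite_toSet.prod A.finite_toSet).image
    (fun p : ℝ × ℝ => |p.1 - p.2|))
  rintro r ⟨x, hx, y, hy, _, rfl⟩
  exact ⟨(x, y), ⟨hx, hy⟩, rfl⟩

lemma le_maxAbs {A : Finset ℝ} {a : ℝ} (ha : a ∈ A) : |a| ≤ maxAbs A :=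
  le_csSup ((absSet_fin A).bddAbove) ⟨a, ha, rfl⟩

lemma maxAbs_exists {A : Finset ℝ} (hA : A.Nonempty) : ∃ a ∈ A, maxAbs A = |a| := by
  have hne : {r : ℝ | ∃ x ∈ A, r = |x|}.Nonempty := ⟨|hA.choose|, hA.choose, hA.choose_spec, rfl⟩
  obtain ⟨a, ha, h⟩ := hne.csSup_mem (absSet_fin A)
  exact ⟨a, ha, h⟩

lemma maxAbs_pos {A : Finset ℝ} (hA : A.Nonempty) (h0 : ∀ a ∈ A, a ≠ 0) :
    0 < maxAbs A := by
  obtain ⟨a, ha, h⟩ := maxAbs_exists hA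
  rw [h]
  exact abs_pos.mpr (h0 a ha)

lemma dGap_le {A : Finset ℝ} {a b : ℝ} (ha : a ∈ A) (hb : b ∈ A) (hab : a ≠ b) :
    dGap A ≤ |a - b| := by
  have h2 : 2 ≤ A.card := Finset.one_lt_card.mpr ⟨a, ha, b, hb, hab⟩
  rw [dGap, if_pos h2]
  exact csInf_le (gapSet_fin A).bddBelow ⟨a, ha, b, hb, hab, rfl⟩

lemma dGap_pos_and_le {A : Finset ℝ} (hA : A.Nonempty) (h0 : ∀ a ∈ A, a ≠ 0) :
    0 < dGap A ∧ dGap A ≤ 2 * maxAbs A := by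
  by_cases h2 : 2 ≤ A.card
  · have hne : {r : ℝ | ∃ x ∈ A, ∃ y ∈ A, x ≠ y ∧ r = |x - y|}.Nonempty := by
      obtain ⟨a, ha, b, hb, hab⟩ := Finset.one_lt_card.mp h2
      exact ⟨|a - b|, a, ha, b, hb, hab, rfl⟩
    obtain ⟨a, ha, b, hb, hab, h⟩ := hne.csInf_mem (gapSet_fin A)
    rw [dGap, if_pos h2, h]
    constructor
    · exact abs_pos.mpr (sub_ne_zero.mpr hab)
    · have h1 := le_maxAbs ha
      have h2 := le_maxAbs hb
      calc |a - b| ≤ |a| + |b| := abs_sub _ _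
        _ ≤ 2 * maxAbs A := by linarith
  · have hne : {r : ℝ | ∃ x ∈ A, r = |x|}.Nonempty := ⟨|hA.choose|, hA.choose, hA.choose_spec, rfl⟩
    obtain ⟨a, ha, h⟩ := hne.csInf_mem (absSet_fin A)
    rw [dGap, if_neg h2, h]
    refine ⟨abs_pos.mpr (h0 a ha), ?_⟩
    have h1 := le_maxAbs ha
    have h3 : 0 ≤ |a| := abs_nonneg a
    linarith

lemma geom_half (n : ℕ) : ∑ i ∈ Finset.range n, ((1:ℝ)/2)^i = 2 - 2 * (1/2)^n := by
  induction n with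
  | zero => simp
  | succ m ih => rw [Finset.sum_range_succ, ih]; ring

lemma aux_key : ∀ (n : ℕ) (A : ℕ → Finset ℝ),
    (∀ k, (A k).Nonempty) → (∀ k, ∀ a ∈ A k, a ≠ 0) →
    (∀ k, maxAbs (A (k + 1)) ≤ dGap (A k) / 4) →
    ∀ x y : ℕ → ℝ, (∀ i < n, x i ∈ A i) → (∀ i < n, y i ∈ A i) →
    ∑ i ∈ Finset.range n, x i = ∑ i ∈ Finset.range n, y i →
    ∀ i < n, x i = y i := by
  intro n
  induction n with
  | zero => intro A _ _ _ x y _ _ _ i hi; omega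
  | succ n IH =>
    intro A hne h0 hmax x y hx hy hsum
    have decay : ∀ i, maxAbs (A (i + 1)) ≤ maxAbs (A 1) * (1/2)^i := by
      intro i
      induction i with
      | zero => simp
      | succ j ih =>
        have h1 := hmax (j + 1)
        have h2 := (dGap_pos_and_le (hne (j + 1)) (h0 (j + 1))).2
        calc maxAbs (A (j + 1 + 1)) ≤ dGap (A (j + 1)) / 4 := h1
          _ ≤ 2 * maxAbs (A (j + 1)) / 4 := by linarith
          _ ≤ maxAbs (A 1) * (1/2)^j / 2 := by linarith
          _ = maxAbs (A 1) * (1/2)^(j + 1) := by ring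
    have e1 := Finset.sum_range_succ' x n
    have e2 := Finset.sum_range_succ' y n
    have hx0 : x 0 = y 0 := by
      by_contra hne0
      have hd := dGap_le (hx 0 (by omega)) (hy 0 (by omega)) hne0
      have hsum' : x 0 - y 0 = ∑ i ∈ Finset.range n, (y (i + 1) - x (i + 1)) := by
        rw [Finset.sum_sub_distrib]
        rw [e1, e2] at hsum
        linarith
      have habs : |x 0 - y 0| ≤ ∑ i ∈ Finset.range n, 2 * maxAbs (A (i + 1)) := by
        rw [hsum']
        refine (Finset.abs_sum_le_sum_abs _ _).trans (Finset.sum_le_sum ?_)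
        intro i hi
        rw [Finset.mem_range] at hi
        have h1 := le_maxAbs (hx (i + 1) (by omega))
        have h2 := le_maxAbs (hy (i + 1) (by omega))
        calc |y (i + 1) - x (i + 1)| ≤ |y (i + 1)| + |x (i + 1)| := abs_sub _ _
          _ ≤ 2 * maxAbs (A (i + 1)) := by linarith
      cases n with
      | zero =>
        simp at habs
        exact hne0 (by linarith)
      | succ m =>
        have hP : 0 < maxAbs (A 1) := maxAbs_pos (hne 1) (h0 1)
        have hS : ∑ i ∈ Finset.range (m + 1), 2 * maxAbs (A (i + 1))
            ≤ 2 * maxAbs (A 1) * (2 - 2 * (1/2)^(m + 1)) := by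
          calc ∑ i ∈ Finset.range (m + 1), 2 * maxAbs (A (i + 1))
              ≤ ∑ i ∈ Finset.range (m + 1), 2 * (maxAbs (A 1) * (1/2)^i) :=
                Finset.sum_le_sum (fun i _ => by have := decay i; linarith)
            _ = 2 * maxAbs (A 1) * ∑ i ∈ Finset.range (m + 1), ((1:ℝ)/2)^i := by
                rw [Finset.mul_sum]; congr 1; ext i; ring
            _ = 2 * maxAbs (A 1) * (2 - 2 * (1/2)^(m + 1)) := by rw [geom_half]
        have hpow : (0:ℝ) < (1/2)^(m + 1) := by positivity
        have hlt : ∑ i ∈ Finset.range (m + 1), 2 * maxAbs (A (i + 1)) < 4 * maxAbs (A 1) := by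
          nlinarith
        have h4 : maxAbs (A 1) ≤ dGap (A 0) / 4 := hmax 0
        have := abs_nonneg (x 0 - y 0)
        linarith
    have hsum2 : ∑ i ∈ Finset.range n, x (i + 1) = ∑ i ∈ Finset.range n, y (i + 1) := by
      rw [e1, e2, hx0] at hsum
      linarith
    have := IH (fun k => A (k + 1)) (fun k => hne (k + 1)) (fun k => h0 (k + 1))
      (fun k => hmax (k + 1)) (fun i => x (i + 1)) (fun i => y (i + 1))
      (fun i hi => hx (i + 1) (by omega)) (fun i hi => hy (i + 1) (by omega)) hsum2
    intro i hi
    cases i with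
    | zero => exact hx0
    | succ j => exact this j (by omega)

theorem stmt0 (A : ℕ → Finset ℝ)
    (hne : ∀ k, (A k).Nonempty)
    (h0 : ∀ k, ∀ a ∈ A k, a ≠ 0)
    (hmax : ∀ k, maxAbs (A (k + 1)) ≤ dGap (A k) / 4)
    (n : ℕ) (x y : ℕ → ℝ)
    (hx : ∀ i < n, x i ∈ A i) (hy : ∀ i < n, y i ∈ A i)
    (hsum : ∑ i ∈ Finset.range n, x i = ∑ i ∈ Finset.range n, y i) :
    ∀ i < n, x i = y i :=
  aux_key n A hne h0 hmax x y hx hy hsum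
end

section
/- Let $t \ge x_1 > 0$, let $0 < \varepsilon < 1/3$, and let $0 < r \le \frac{\varepsilon x_1}{2(1-\varepsilon)}$. Define $E_t = \{\lambda > 0 : \{t/\lambda\} \in (\varepsilon, 1-\varepsilon)\}$, where $\{u\}$ denotes the fractional part of $u$. Then the Lebesgue measure of $E_t \cap [0, r]$ is strictly greater than $(1 - 3\varepsilon) r$. -/
open MeasureTheory Set Filter

set_option maxHeartbeats 1600000 in
theorem stmt3 (t x1 ε r : ℝ) (hx1 : 0 < x1) (ht : x1 ≤ t)
    (hε : 0 < ε) (hε' : ε < 1 / 3)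
    (hr : 0 < r) (hr' : r ≤ ε * x1 / (2 * (1 - ε))) :
    (1 - 3 * ε) * r <
      (MeasureTheory.volume
        ({l : ℝ | 0 < l ∧ Int.fract (t / l) ∈ Set.Ioo ε (1 - ε)} ∩ Set.Icc 0 r)).toReal := by
  have ht0 : 0 < t := lt_of_lt_of_le hx1 ht
  have hε1 : ε < 1 := by linarith
  -- key inequality: 2(1-ε) r ≤ ε t
  have hkey : 2 * (1 - ε) * r ≤ ε * t := by
    have h2 : (0:ℝ) < 2 * (1 - ε) := by linarith
    have := (le_div_iff₀ h2).mp hr'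
    nlinarith [mul_le_mul_of_nonneg_left ht (le_of_lt hε)]
  have ht4 : 4 * r < t := by nlinarith [mul_pos hε hr]
  have htr4 : (4:ℝ) < t / r := (lt_div_iff₀ hr).mpr (by linarith)
  set M : ℕ := ⌈t / r - ε⌉₊ with hMdef
  have hMge : t / r - ε ≤ (M : ℝ) := Nat.le_ceil _
  have hM35 : (3.5 : ℝ) < (M : ℝ) := by
    have : (3.5 : ℝ) < t / r - ε := by linarith
    linarith
  have hMmin : ∀ n : ℕ, t / r - ε ≤ (n:ℝ) → M ≤ n := fun n hn => Nat.ceil_le.mpr hn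
  clear_value M
  -- the bad set
  set B : Set ℝ := ⋃ j : ℕ, Icc (t / ((M : ℝ) + j + ε)) (t / ((M : ℝ) + j - ε)) with hBdef
  -- inclusion of the complement of B in the good set
  have hsub : Ioc 0 r \ B ⊆
      {l : ℝ | 0 < l ∧ Int.fract (t / l) ∈ Set.Ioo ε (1 - ε)} ∩ Set.Icc 0 r := by
    rintro l ⟨⟨hl0, hlr⟩, hlB⟩
    refine ⟨⟨hl0, ?_⟩, ⟨le_of_lt hl0, hlr⟩⟩
    by_contra hfr
    rw [Set.mem_Ioo] at hfr
    push_neg at hfr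
    set u : ℝ := t / l with hudef
    have hu_tr : t / r ≤ u := by
      apply div_le_div_of_nonneg_left (le_of_lt ht0) hl0 hlr
    -- find an integer m with m - ε ≤ u ≤ m + ε
    obtain ⟨m, hm1, hm2⟩ : ∃ m : ℤ, (m : ℝ) - ε ≤ u ∧ u ≤ (m : ℝ) + ε := by
      rcases le_or_gt (Int.fract u) ε with h1 | h1
      · refine ⟨⌊u⌋, ?_, ?_⟩
        · have := Int.floor_le u; linarith
        · have : u - (⌊u⌋ : ℝ) = Int.fract u := Int.self_sub_floor u
          linarith
      · have h2 : 1 - ε ≤ Int.fract u := hfr h1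
        refine ⟨⌊u⌋ + 1, ?_, ?_⟩
        · have : u - (⌊u⌋ : ℝ) = Int.fract u := Int.self_sub_floor u
          push_cast
          linarith
        · have := Int.lt_floor_add_one u
          push_cast
          linarith
    have hm35 : (3.5 : ℝ) < (m : ℝ) := by linarith
    have hm0 : 0 ≤ m := by
      have h0 : (0:ℝ) ≤ (m:ℝ) := by linarith
      exact_mod_cast h0
    set n : ℕ := m.toNat with hndef
    have hnm : (n : ℝ) = (m : ℝ) := by
      rw [hndef]; exact_mod_cast Int.toNat_of_nonneg hm0
    have hMn : M ≤ n := hMmin n (by rw [hnm]; linarith)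
    apply hlB
    refine Set.mem_iUnion.mpr ⟨n - M, ?_⟩
    have hcast : (M : ℝ) + ((n - M : ℕ) : ℝ) = (m : ℝ) := by
      rw [← hnm]; push_cast [Nat.cast_sub hMn]; ring
    rw [hcast]
    have hmε : (0:ℝ) < (m : ℝ) - ε := by linarith
    have hmε' : (0:ℝ) < (m : ℝ) + ε := by linarith
    constructor
    · rw [div_le_iff₀ hmε']
      have : t ≤ ((m : ℝ) + ε) * l := by
        rw [hudef] at hm2
        calc t = (t / l) * l := by field_simp
          _ ≤ ((m : ℝ) + ε) * l := by
              apply mul_le_mul_of_nonneg_right hm2 (le_of_lt hl0)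
      linarith
    · rw [le_div_iff₀ hmε]
      rw [hudef] at hm1
      calc l * ((m:ℝ) - ε) = ((m:ℝ) - ε) * l := by ring
        _ ≤ (t / l) * l := mul_le_mul_of_nonneg_right hm1 (le_of_lt hl0)
        _ = t := by field_simp
  -- telescoping bound on the measure of B
  set g : ℕ → ℝ := fun j => 2 * ε * t / ((M : ℝ) + j - 1/2) with hgdef
  clear_value B
  have hden : ∀ j : ℕ, (3 : ℝ) < (M : ℝ) + j - 1/2 := by
    intro j
    have : (0:ℝ) ≤ (j:ℝ) := Nat.cast_nonneg j
    linarith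
  have hg_nonneg : ∀ j, 0 ≤ g j := by
    intro j
    apply div_nonneg (by positivity)
    linarith [hden j]
  have hd_eq : ∀ j : ℕ, g j - g (j+1) = 2 * ε * t / (((M : ℝ) + j - 1/2) * ((M : ℝ) + j + 1/2)) := by
    intro j
    have h1 := hden j
    have h2 : (0:ℝ) < (M : ℝ) + j + 1/2 := by linarith
    rw [hgdef]
    push_cast
    rw [div_sub_div _ _ (by linarith : ((M : ℝ) + j - 1/2) ≠ 0) (by push_cast; linarith : ((M : ℝ) + (j+1) - 1/2) ≠ 0)]
    rw [div_eq_div_iff (by nlinarith) (by nlinarith)]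
    ring
  have hd_nonneg : ∀ j, 0 ≤ g j - g (j+1) := by
    intro j
    rw [hd_eq j]
    have h1 := hden j
    apply div_nonneg (by positivity)
    nlinarith
  -- length of each bad interval is at most the telescoping term
  have hf_le : ∀ j : ℕ, t / ((M : ℝ) + j - ε) - t / ((M : ℝ) + j + ε) ≤ g j - g (j+1) := by
    intro j
    have h1 := hden j
    have haε : (0:ℝ) < (M : ℝ) + j - ε := by linarith
    have hbε : (0:ℝ) < (M : ℝ) + j + ε := by linarith
    have e1 : t / ((M : ℝ) + j - ε) - t / ((M : ℝ) + j + ε)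
        = 2 * ε * t / (((M : ℝ) + j - ε) * ((M : ℝ) + j + ε)) := by
      rw [div_sub_div _ _ (ne_of_gt haε) (ne_of_gt hbε)]
      ring_nf
    rw [e1, hd_eq j]
    have hb : (0:ℝ) < ((M : ℝ) + j - 1/2) * ((M : ℝ) + j + 1/2) := by nlinarith
    have hbc : ((M : ℝ) + j - 1/2) * ((M : ℝ) + j + 1/2)
        ≤ ((M : ℝ) + j - ε) * ((M : ℝ) + j + ε) := by nlinarith [sq_nonneg ε]
    exact div_le_div_of_nonneg_left (by positivity) hb hbc
  -- g tends to 0 and the telescoping series sums to g 0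
  have hg_tendsto : Tendsto g atTop (nhds 0) := by
    rw [hgdef]
    apply Tendsto.div_atTop tendsto_const_nhds
    apply tendsto_atTop_add_const_right
    apply tendsto_atTop_add_const_left
    exact tendsto_natCast_atTop_atTop
  have hsum : HasSum (fun j => g j - g (j+1)) (g 0) := by
    rw [hasSum_iff_tendsto_nat_of_nonneg hd_nonneg]
    have heq : (fun n : ℕ => ∑ i ∈ Finset.range n, (g i - g (i+1))) = fun n => g 0 - g n :=
      funext fun n => Finset.sum_range_sub' g n
    rw [heq]
    have h := hg_tendsto.const_sub (g 0)
    rw [sub_zero] at h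
    exact h
  -- bound volume of B
  have hB_le : volume B ≤ ENNReal.ofReal (g 0) := by
    rw [hBdef]
    calc volume (⋃ j : ℕ, Icc (t / ((M : ℝ) + j + ε)) (t / ((M : ℝ) + j - ε))) ≤ ∑' j : ℕ, volume (Icc (t / ((M : ℝ) + j + ε)) (t / ((M : ℝ) + j - ε))) :=
          measure_iUnion_le _
      _ = ∑' j : ℕ, ENNReal.ofReal (t / ((M : ℝ) + j - ε) - t / ((M : ℝ) + j + ε)) := by
          simp [Real.volume_Icc]
      _ ≤ ∑' j : ℕ, ENNReal.ofReal (g j - g (j+1)) :=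
          ENNReal.tsum_le_tsum (fun j => ENNReal.ofReal_le_ofReal (hf_le j))
      _ = ENNReal.ofReal (∑' j : ℕ, (g j - g (j+1))) :=
          (ENNReal.ofReal_tsum_of_nonneg hd_nonneg hsum.summable).symm
      _ = ENNReal.ofReal (g 0) := by rw [hsum.tsum_eq]
  -- g 0 < 3 ε r
  have hg0 : g 0 < 3 * ε * r := by
    rw [hgdef]
    simp only [Nat.cast_zero, add_zero]
    rw [div_lt_iff₀ (by linarith [hden 0, (by norm_num : ((0:ℕ):ℝ) = 0)] : (0:ℝ) < (M:ℝ) - 1/2)]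
    have hMub : (M : ℝ) - 1/2 ≥ t / r - ε - 1/2 := by linarith
    have htr : t / r * r = t := by field_simp
    nlinarith [mul_pos hε hr, mul_pos hr hε, sq_nonneg ε,
      mul_le_mul_of_nonneg_left hMub (by positivity : (0:ℝ) ≤ 3 * ε * r),
      mul_pos (mul_pos hε hε) hr]
  -- assemble
  set S : Set ℝ := {l : ℝ | 0 < l ∧ Int.fract (t / l) ∈ Set.Ioo ε (1 - ε)} ∩ Set.Icc 0 r with hSdef
  have hV_le : volume S ≤ ENNReal.ofReal r := by
    calc volume S ≤ volume (Icc (0:ℝ) r) := measure_mono (inter_subset_right)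
      _ = ENNReal.ofReal r := by rw [Real.volume_Icc, sub_zero]
  have hV_fin : volume S ≠ ⊤ := ne_top_of_le_ne_top (by simp) hV_le
  have hmain : ENNReal.ofReal r ≤ volume S + ENNReal.ofReal (g 0) := by
    calc ENNReal.ofReal r = volume (Ioc (0:ℝ) r) := by rw [Real.volume_Ioc, sub_zero]
      _ ≤ volume ((Ioc (0:ℝ) r \ B) ∪ B) := measure_mono (fun x hx => by
            by_cases hxB : x ∈ B
            · exact Or.inr hxB
            · exact Or.inl ⟨hx, hxB⟩)
      _ ≤ volume (Ioc (0:ℝ) r \ B) + volume B := measure_union_le _ _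
      _ ≤ volume S + ENNReal.ofReal (g 0) := add_le_add (measure_mono hsub) hB_le
  have hg0_nonneg : 0 ≤ g 0 := hg_nonneg 0
  have hlb : ENNReal.ofReal (r - g 0) ≤ volume S := by
    rw [ENNReal.ofReal_sub r hg0_nonneg]
    exact tsub_le_iff_right.mpr hmain
  have := ENNReal.toReal_mono hV_fin hlb
  rw [ENNReal.toReal_ofReal (by nlinarith)] at this
  nlinarith
end

section
/- Let $F = \{t > 0 : \{t\} \in (\varepsilon, 1-\varepsilon)\}$ and $\lambda > 0$. Then $\bigcup_{x :\ \{x/\lambda\} < \varepsilon} (\lambda F + x) = \{t : \{t/\lambda\} > \varepsilon\}$, where the union is over all real $x$ with fractional part of $x/\lambda$ less than $\varepsilon$, and $\lambda F + x = \{\lambda f + x : f \in F\}$. -/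
theorem stmt5 (ε lam : ℝ) (hε : 0 < ε) (hε' : ε < 1 / 2) (hlam : 0 < lam) :
    (⋃ x ∈ {x : ℝ | Int.fract (x / lam) < ε},
        (fun f => lam * f + x) '' {t : ℝ | 0 < t ∧ Int.fract t ∈ Set.Ioo ε (1 - ε)})
      = {t : ℝ | ε < Int.fract (t / lam)} := by
  ext t
  simp only [Set.mem_iUnion, Set.mem_image, Set.mem_setOf_eq, Set.mem_Ioo]
  constructor
  · rintro ⟨x, hx, f, ⟨hf0, hfe, hfe'⟩, rfl⟩
    have h : (lam * f + x) / lam = f + x / lam := by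
      field_simp
    rw [h]
    have hb0 := Int.fract_nonneg (x / lam)
    have h1 : f + x / lam = ((⌊f⌋ + ⌊x / lam⌋ : ℤ) : ℝ)
        + (Int.fract f + Int.fract (x / lam)) := by
      have e1 := Int.floor_add_fract f
      have e2 := Int.floor_add_fract (x / lam)
      push_cast
      linarith
    rw [h1, Int.fract_intCast_add, Int.fract_eq_self.2 ⟨by linarith, by linarith⟩]
    linarith
  · intro ht
    set s := Int.fract (t / lam) with hsdef
    have hs1 : s < 1 := Int.fract_lt_one _
    set c := (max ε (s - ε) + min (1 - ε) s) / 2 with hcdef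
    have hm1 : ε ≤ max ε (s - ε) := le_max_left _ _
    have hm2 : s - ε ≤ max ε (s - ε) := le_max_right _ _
    have hm3 : max ε (s - ε) < s := max_lt ht (by linarith)
    have hm4 : max ε (s - ε) < 1 - ε := max_lt (by linarith) (by linarith)
    have hn1 : min (1 - ε) s ≤ 1 - ε := min_le_left _ _
    have hn2 : min (1 - ε) s ≤ s := min_le_right _ _
    have hn3 : ε < min (1 - ε) s := lt_min (by linarith) ht
    have hn4 : s - ε < min (1 - ε) s := lt_min (by linarith) (by linarith)
    have hc1 : ε < c := by rw [hcdef]; linarith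
    have hc2 : c < 1 - ε := by rw [hcdef]; linarith
    have hc3 : c < s := by rw [hcdef]; linarith
    have hc4 : s - ε < c := by rw [hcdef]; linarith
    have hcf : Int.fract c = c := Int.fract_eq_self.2 ⟨by linarith, by linarith⟩
    refine ⟨t - lam * c, ?_, c, ⟨by linarith, by rw [hcf]; exact hc1,
      by rw [hcf]; exact hc2⟩, by ring⟩
    have h : (t - lam * c) / lam = t / lam - c := by
      field_simp
    rw [h]
    have h2 : t / lam - c = ((⌊t / lam⌋ : ℤ) : ℝ) + (s - c) := by
      have e1 := Int.floor_add_fract (t / lam)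
      rw [hsdef]; push_cast; linarith
    rw [h2, Int.fract_intCast_add, Int.fract_eq_self.2 ⟨by linarith, by linarith⟩]
    linarith
end

section
/- Let $0 < x_1 \le \cdots \le x_l < 1$ and let $y_1 < \cdots < y_\nu = x_l$ be a maximal $\mathbb{Q}$-linearly independent subset of $\{x_1,\ldots,x_l\}$ containing $x_l$, so that $x_k = \frac{1}{p}\sum_{i=1}^\nu n_i^{(k)} y_i$ with integers $n_i^{(k)}$ and a common denominator $p$. Set $\tau = \max_{i,k}|n_i^{(k)}|$ and for $m \ge 1$ define $A_m = \{\frac{1}{p}(n_1 y_1 + \cdots + n_\nu y_\nu) : n_i \in \mathbb{Z},\ |n_i| \le m\tau \text{ for } i < \nu,\ |n_\nu| \le \nu m \tau + 1\}$. Then for every $x \in A_m \cap (-x_l, 0)$ and every $k \in \{1,\ldots,l\}$, one has $x + x_k \in A_{m+1} \cap (-x_l, x_l)$; that is, $(A_m \cap (-x_l, 0)) + \{x_1,\ldots,x_l\} \subset A_{m+1} \cap (-x_l, x_l)$. -/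
theorem stmt7 (l ν : ℕ) (hl : 0 < l) (hν : 0 < ν)
    (x : Fin l → ℝ) (y : Fin ν → ℝ)
    (hx0 : 0 < x ⟨0, hl⟩) (hxmono : Monotone x) (hx1 : x ⟨l - 1, by omega⟩ < 1)
    (hymono : StrictMono y)
    (hind : LinearIndependent ℚ y)
    (hyx : ∀ i, ∃ k, y i = x k)
    (hytop : y ⟨ν - 1, by omega⟩ = x ⟨l - 1, by omega⟩)
    (p : ℕ) (hp : 0 < p) (n : Fin ν → Fin l → ℤ)
    (hrep : ∀ k, x k = (∑ i, (n i k : ℝ) * y i) / p)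
    (τ : ℕ) (hτ : τ = Finset.univ.sup fun ik : Fin ν × Fin l => (n ik.1 ik.2).natAbs)
    (A : ℕ → Set ℝ)
    (hA : ∀ m : ℕ, A m = {z : ℝ | ∃ c : Fin ν → ℤ,
        (∀ i : Fin ν, (i : ℕ) < ν - 1 → (c i).natAbs ≤ m * τ) ∧
        (c ⟨ν - 1, by omega⟩).natAbs ≤ ν * m * τ + 1 ∧
        z = (∑ i, (c i : ℝ) * y i) / p})
    (m : ℕ) :
    ∀ z ∈ A m ∩ Set.Ioo (-(x ⟨l - 1, by omega⟩)) 0, ∀ k : Fin l,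
      z + x k ∈ A (m + 1) ∩ Set.Ioo (-(x ⟨l - 1, by omega⟩)) (x ⟨l - 1, by omega⟩) := by
  intro z hz k
  obtain ⟨hzA, hz1, hz2⟩ := hz
  rw [hA] at hzA
  obtain ⟨c, hc1, hc2, hceq⟩ := hzA
  have hτi : ∀ i, (n i k).natAbs ≤ τ := fun i => by
    rw [hτ]
    exact Finset.le_sup (f := fun ik : Fin ν × Fin l => (n ik.1 ik.2).natAbs)
      (Finset.mem_univ (i, k))
  have hk0 : 0 < x k := lt_of_lt_of_le hx0 (hxmono (by simp [Fin.le_def]))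
  have hkl : x k ≤ x ⟨l - 1, by omega⟩ := hxmono (by
    simp [Fin.le_def]; omega)
  refine ⟨?_, by linarith, by linarith⟩
  rw [hA]
  refine ⟨fun i => c i + n i k, ?_, ?_, ?_⟩
  · intro i hi
    calc (c i + n i k).natAbs ≤ (c i).natAbs + (n i k).natAbs := Int.natAbs_add_le _ _
      _ ≤ m * τ + τ := add_le_add (hc1 i hi) (hτi i)
      _ = (m + 1) * τ := by ring
  · calc (c ⟨ν - 1, by omega⟩ + n ⟨ν - 1, by omega⟩ k).natAbs
        ≤ (c ⟨ν - 1, by omega⟩).natAbs + (n ⟨ν - 1, by omega⟩ k).natAbs :=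
          Int.natAbs_add_le _ _
      _ ≤ (ν * m * τ + 1) + τ := add_le_add hc2 (hτi _)
      _ ≤ ν * (m + 1) * τ + 1 := by nlinarith [hν]
  · rw [hceq, hrep k, ← add_div]
    congr 1
    rw [← Finset.sum_add_distrib]
    exact Finset.sum_congr rfl fun i _ => by push_cast; ring
end

section
/- Let $\mu = \sum_{k=1}^l m_k \delta_{x_k}$ with $m_k > 0$, $0 < x_1 < \cdots < x_l < 1$, $|\mu| = \sum_k m_k$, and let $0 < \varepsilon < 1/3$. Then there exist finite sets $E, G \subset (-x_l, x_l)$ such that $E \cap G = \varnothing$, $\#E > \frac{\varepsilon\, \#G}{4}$, and $S_\mu \mathbb{1}_G(x) > (1 - 3\varepsilon)|\mu|$ for all $x \in E$, where $S_\mu f(x) = \sum_{k=1}^l m_k f(x + x_k)$ and $\mathbb{1}_G$ is the indicator function of $G$. -/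
open Finset

private lemma exists_pow_lt_two_pow (l : ℕ) (hl : 0 < l) :
    ∃ n : ℕ, (n + 1) ^ l < 2 ^ n := by
  refine ⟨l * (2 * l + 2), ?_⟩
  have h1 : l < 2 ^ l := Nat.lt_two_pow_self (n := l)
  have h2 : l * l < 2 ^ (2 * l) := by
    have := mul_lt_mul'' h1 h1 (Nat.zero_le l) (Nat.zero_le l)
    calc l * l < 2 ^ l * 2 ^ l := this
      _ = 2 ^ (2 * l) := by rw [← pow_add]; ring_nf
  have hll : l ≤ l * l + 1 := by nlinarith
  have h3 : l * (2 * l + 2) + 1 < 2 ^ (2 * l + 2) := by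
    have h4 : 2 ^ (2 * l + 2) = 4 * 2 ^ (2 * l) := by rw [pow_add]; ring
    nlinarith [h2, hll]
  calc (l * (2 * l + 2) + 1) ^ l < (2 ^ (2 * l + 2)) ^ l :=
        Nat.pow_lt_pow_left h3 (by omega)
    _ = 2 ^ ((2 * l + 2) * l) := by rw [← pow_mul]
    _ = 2 ^ (l * (2 * l + 2)) := by rw [Nat.mul_comm]

private noncomputable def Wbox (l : ℕ) (x : Fin l → ℝ) (n : ℕ) : Finset ℝ :=
  (Fintype.piFinset fun _ : Fin l => Finset.range (n + 1)).image
    fun c => ∑ k, (c k : ℝ) * x k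

private lemma zero_mem_Wbox (l : ℕ) (x : Fin l → ℝ) (n : ℕ) :
    (0 : ℝ) ∈ Wbox l x n := by
  refine Finset.mem_image.mpr ⟨fun _ => 0, ?_, by simp⟩
  simp [Fintype.mem_piFinset]

private lemma card_Wbox (l : ℕ) (x : Fin l → ℝ) (n : ℕ) :
    (Wbox l x n).card ≤ (n + 1) ^ l := by
  refine le_trans Finset.card_image_le ?_
  rw [Fintype.card_piFinset]
  simp

private lemma shift_mem_Wbox (l : ℕ) (x : Fin l → ℝ) (n : ℕ) (w : ℝ)
    (hw : w ∈ Wbox l x n) (k : Fin l) : w + x k ∈ Wbox l x (n + 1) := by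
  obtain ⟨c, hc, rfl⟩ := Finset.mem_image.mp hw
  rw [Fintype.mem_piFinset] at hc
  refine Finset.mem_image.mpr ⟨fun j => if j = k then c j + 1 else c j, ?_, ?_⟩
  · rw [Fintype.mem_piFinset]
    intro j
    have := hc j
    rw [Finset.mem_range] at this ⊢
    split <;> omega
  · have h : ∀ j : Fin l, (((if j = k then c j + 1 else c j) : ℕ) : ℝ) * x j
        = (c j : ℝ) * x j + (if j = k then x j else 0) := by
      intro j; split <;> push_cast <;> ring
    rw [Finset.sum_congr rfl fun j _ => h j, Finset.sum_add_distrib,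
      Finset.sum_ite_eq' Finset.univ k fun j => x j]
    simp

private noncomputable def cntF (l : ℕ) (x : Fin l → ℝ) (T : ℝ) (n : ℕ) (α : ℝ) : ℕ :=
  ((Wbox l x n).filter fun w => α < w ∧ w ≤ α + T).card

private noncomputable def MnF (l : ℕ) (x : Fin l → ℝ) (T : ℝ) (n : ℕ) : ℕ :=
  (Wbox l x n).sup fun w => cntF l x T n (w - T)

private lemma cntF_le_MnF (l : ℕ) (x : Fin l → ℝ) (T : ℝ) (n : ℕ) (α : ℝ) :
    cntF l x T n α ≤ MnF l x T n := by
  rcases Finset.eq_empty_or_nonempty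
      ((Wbox l x n).filter fun w => α < w ∧ w ≤ α + T) with he | hne
  · simp [cntF, he]
  · have hw₀F := Finset.max'_mem _ hne
    rw [Finset.mem_filter] at hw₀F
    have hsub : ((Wbox l x n).filter fun w => α < w ∧ w ≤ α + T) ⊆
        (Wbox l x n).filter fun w =>
          (((Wbox l x n).filter fun w => α < w ∧ w ≤ α + T).max' hne - T) < w ∧
          w ≤ (((Wbox l x n).filter fun w => α < w ∧ w ≤ α + T).max' hne - T) + T := by
      intro w hwF
      have hw := Finset.mem_filter.mp hwF
      refine Finset.mem_filter.mpr ⟨hw.1, ?_, ?_⟩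
      · linarith [hw₀F.2.2, hw.2.1]
      · have := Finset.le_max' _ w hwF
        linarith
    calc cntF l x T n α
        ≤ _ := Finset.card_le_card hsub
      _ = cntF l x T n
          (((Wbox l x n).filter fun w => α < w ∧ w ≤ α + T).max' hne - T) := rfl
      _ ≤ MnF l x T n := Finset.le_sup (f := fun w => cntF l x T n (w - T)) hw₀F.1

private lemma one_le_MnF (l : ℕ) (x : Fin l → ℝ) (T : ℝ) (hT : 0 < T) (n : ℕ) :
    1 ≤ MnF l x T n := by
  have h0 : (0 : ℝ) ∈ (Wbox l x n).filter fun w => (0 - T) < w ∧ w ≤ (0 - T) + T :=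
    Finset.mem_filter.mpr ⟨zero_mem_Wbox l x n, by linarith, by linarith⟩
  have h1 : 1 ≤ cntF l x T n (0 - T) := Finset.card_pos.mpr ⟨0, h0⟩
  exact le_trans h1 (Finset.le_sup (f := fun w => cntF l x T n (w - T)) (zero_mem_Wbox l x n))

private lemma MnF_le_card (l : ℕ) (x : Fin l → ℝ) (T : ℝ) (n : ℕ) :
    MnF l x T n ≤ (Wbox l x n).card :=
  Finset.sup_le fun w _ => Finset.card_filter_le _ _

private lemma greedy_exists (l : ℕ) (m x : Fin l → ℝ) (hm : ∀ k, 0 ≤ m k)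
    (hx : ∀ k, 0 < x k) (c : ℝ) (V : Finset ℝ) :
    ∃ A : Finset ℝ, A ⊆ V ∧
      (∀ z ∈ A, (∑ k : Fin l, if z + x k ∈ A then m k else 0) < c) ∧
      (∀ z ∈ V, z ∉ A → c ≤ ∑ k : Fin l, if z + x k ∈ A then m k else 0) := by
  induction V using Finset.strongInductionOn with
  | _ V ih =>
  rcases V.eq_empty_or_nonempty with rfl | hne
  · exact ⟨∅, Finset.Subset.refl _, by simp, by simp⟩
  obtain ⟨A, hAsub, hin, hout⟩ :=
    ih (V.erase (V.min' hne)) (Finset.erase_ssubset (V.min'_mem hne))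
  have hz₀lt : ∀ z ∈ A, V.min' hne < z := by
    intro z hz
    have h' := Finset.mem_erase.mp (hAsub hz)
    exact lt_of_le_of_ne (V.min'_le z h'.2) (Ne.symm h'.1)
  by_cases hc : (∑ k : Fin l, if V.min' hne + x k ∈ A then m k else 0) < c
  · refine ⟨insert (V.min' hne) A, ?_, ?_, ?_⟩
    · intro z hz
      rcases Finset.mem_insert.mp hz with heq | hz
      · rw [heq]; exact V.min'_mem hne
      · exact (Finset.mem_erase.mp (hAsub hz)).2
    · intro z hz
      rcases Finset.mem_insert.mp hz with heq | hz
      · have hsum : (∑ k : Fin l, if z + x k ∈ insert (V.min' hne) A then m k else 0)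
            = ∑ k : Fin l, if z + x k ∈ A then m k else 0 := by
          refine Finset.sum_congr rfl fun k _ => ?_
          have hne' : z + x k ≠ V.min' hne := by
            have := hx k; rw [heq]; intro h; linarith
          simp [Finset.mem_insert, hne']
        rw [hsum, heq]; exact hc
      · have hlt := hz₀lt z hz
        have hsum : (∑ k : Fin l, if z + x k ∈ insert (V.min' hne) A then m k else 0)
            = ∑ k : Fin l, if z + x k ∈ A then m k else 0 := by
          refine Finset.sum_congr rfl fun k _ => ?_
          have hne' : z + x k ≠ V.min' hne := by have := hx k; intro h; linarith
          simp [Finset.mem_insert, hne']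
        rw [hsum]; exact hin z hz
    · intro z hzV hznot
      have hzne : z ≠ V.min' hne := fun h => hznot (h ▸ Finset.mem_insert_self _ _)
      have hznA : z ∉ A := fun h => hznot (Finset.mem_insert_of_mem h)
      refine le_trans (hout z (Finset.mem_erase.mpr ⟨hzne, hzV⟩) hznA)
        (Finset.sum_le_sum fun k _ => ?_)
      by_cases h : z + x k ∈ A
      · simp [h, Finset.mem_insert_of_mem h]
      · simp only [h, if_false]
        split
        · exact hm k
        · exact le_refl 0
  · refine ⟨A, fun z hz => (Finset.mem_erase.mp (hAsub hz)).2, hin, ?_⟩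
    intro z hzV hznA
    rcases eq_or_ne z (V.min' hne) with heq | hzne
    · rw [heq]; exact not_lt.mp hc
    · exact hout z (Finset.mem_erase.mpr ⟨hzne, hzV⟩) hznA

set_option maxHeartbeats 1000000 in
theorem stmt10 (l : ℕ) (hl : 0 < l) (m x : Fin l → ℝ)
    (hm : ∀ k, 0 < m k) (hx0 : ∀ k, 0 < x k) (hxmono : StrictMono x)
    (hx1 : x ⟨l - 1, by omega⟩ < 1)
    (ε : ℝ) (hε : 0 < ε) (hε' : ε < 1 / 3) :
    ∃ E G : Finset ℝ,
      (↑E : Set ℝ) ⊆ Set.Ioo (-(x ⟨l - 1, by omega⟩)) (x ⟨l - 1, by omega⟩) ∧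
      (↑G : Set ℝ) ⊆ Set.Ioo (-(x ⟨l - 1, by omega⟩)) (x ⟨l - 1, by omega⟩) ∧
      Disjoint E G ∧
      ε * (G.card : ℝ) / 4 < (E.card : ℝ) ∧
      ∀ z ∈ E, (1 - 3 * ε) * (∑ k, m k) <
        ∑ k, m k * Set.indicator (↑G : Set ℝ) 1 (z + x k) := by
  have hl1 : l - 1 < l := by omega
  haveI : Nonempty (Fin l) := ⟨⟨0, hl⟩⟩
  have hS0 : 0 < ∑ k, m k := Finset.sum_pos (fun k _ => hm k) Finset.univ_nonempty
  have hX0 : 0 < x ⟨l - 1, hl1⟩ := hx0 _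
  have hxle : ∀ k, x k ≤ x ⟨l - 1, hl1⟩ := by
    intro k
    refine hxmono.monotone ?_
    rw [Fin.le_def]
    have := k.isLt
    simp only
    omega
  set T : ℝ := x ⟨l - 1, hl1⟩ / 2 with hTdef
  have hT0 : 0 < T := by rw [hTdef]; linarith
  have hpig : ∃ n, MnF l x T (n + 1) < 2 * MnF l x T n := by
    by_contra hcon
    push_neg at hcon
    have hgrow : ∀ n, 2 ^ n ≤ MnF l x T n := by
      intro n
      induction n with
      | zero => simpa using one_le_MnF l x T hT0 0
      | succ n ih =>
        calc 2 ^ (n + 1) = 2 * 2 ^ n := by rw [pow_succ]; ring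
          _ ≤ 2 * MnF l x T n := Nat.mul_le_mul_left 2 ih
          _ ≤ MnF l x T (n + 1) := hcon n
    obtain ⟨n, hn⟩ := exists_pow_lt_two_pow l hl
    have h1 := hgrow n
    have h2 := MnF_le_card l x T n
    have h3 := card_Wbox l x n
    have : (2:ℕ) ^ n < 2 ^ n := lt_of_le_of_lt (le_trans h1 (le_trans h2 h3)) hn
    exact lt_irrefl _ this
  obtain ⟨n, hgood⟩ := hpig
  obtain ⟨wstar, hwW, hwsup⟩ := Finset.exists_mem_eq_sup (Wbox l x n)
    ⟨0, zero_mem_Wbox l x n⟩ (fun w => cntF l x T n (w - T))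
  set α0 : ℝ := wstar - T with hα0
  set τ : ℝ := wstar + T / 2 with hτ
  set V : Finset ℝ :=
    ((Wbox l x n).filter fun w => α0 < w ∧ w ≤ α0 + T).image (fun v => v - τ) with hVdef
  have hinj : Function.Injective (fun v : ℝ => v - τ) := by
    intro a b h; simpa using h
  have hVcard : V.card = MnF l x T n := by
    rw [hVdef, Finset.card_image_of_injective _ hinj]
    exact hwsup.symm
  have hVmem : ∀ v ∈ V, -(3 / 2) * T < v ∧ v ≤ -(T / 2) := by
    intro v hv
    obtain ⟨w, hwmem, rfl⟩ := Finset.mem_image.mp hv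
    have hw := Finset.mem_filter.mp hwmem
    constructor
    · have := hw.2.1; rw [hα0] at this; rw [hτ]; linarith
    · have := hw.2.2; rw [hα0] at this; rw [hτ]; linarith
  obtain ⟨A, hAV, hAin, hAout⟩ :=
    greedy_exists l m x (fun k => (hm k).le) hx0 (3 * ε * (∑ k, m k)) V
  set B : Finset ℝ := Finset.univ.biUnion (fun k : Fin l => A.image fun z => z + x k)
    with hBdef
  refine ⟨A, B \ A, ?_, ?_, ?_, ?_, ?_⟩
  · intro z hz
    rw [Finset.mem_coe] at hz
    obtain ⟨h1, h2⟩ := hVmem z (hAV hz)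
    refine Set.mem_Ioo.mpr ⟨?_, ?_⟩
    · show -(x ⟨l - 1, hl1⟩) < z
      rw [hTdef] at h1; linarith
    · show z < x ⟨l - 1, hl1⟩
      rw [hTdef] at h2; linarith
  · intro g hg
    rw [Finset.mem_coe] at hg
    have hgB : g ∈ B := (Finset.mem_sdiff.mp hg).1
    obtain ⟨k, -, hk⟩ := Finset.mem_biUnion.mp hgB
    obtain ⟨z, hzA, rfl⟩ := Finset.mem_image.mp hk
    obtain ⟨h1, h2⟩ := hVmem z (hAV hzA)
    have hk1 := hx0 k
    have hk2 := hxle k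
    refine Set.mem_Ioo.mpr ⟨?_, ?_⟩
    · show -(x ⟨l - 1, hl1⟩) < z + x k
      rw [hTdef] at h1; linarith
    · show z + x k < x ⟨l - 1, hl1⟩
      rw [hTdef] at h2; linarith
  · exact disjoint_sdiff_self_right
  · -- cardinality
    have hBsub : B \ A ⊆
        (((Wbox l x (n+1)).filter fun w => α0 < w ∧ w ≤ α0 + T)
          ∪ ((Wbox l x (n+1)).filter fun w => α0 + T < w ∧ w ≤ α0 + T + T)
          ∪ ((Wbox l x (n+1)).filter fun w => α0 + T + T < w ∧ w ≤ α0 + T + T + T)).image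
          fun v => v - τ := by
      intro g hg
      have hgB : g ∈ B := (Finset.mem_sdiff.mp hg).1
      obtain ⟨k, -, hk⟩ := Finset.mem_biUnion.mp hgB
      obtain ⟨z, hzA, rfl⟩ := Finset.mem_image.mp hk
      obtain ⟨w, hwmem, hwz⟩ := Finset.mem_image.mp (hAV hzA)
      have hwf := Finset.mem_filter.mp hwmem
      refine Finset.mem_image.mpr ⟨w + x k, ?_, by rw [← hwz]; ring⟩
      have hW' := shift_mem_Wbox l x n w hwf.1 k
      have hlow : α0 < w + x k := by linarith [hwf.2.1, hx0 k]
      have hup : w + x k ≤ α0 + T + T + T := by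
        have h5 := hxle k
        have h6 := hwf.2.2
        rw [hTdef] at h6 ⊢
        linarith
      rcases le_or_gt (w + x k) (α0 + T) with h | h
      · exact Finset.mem_union_left _ (Finset.mem_union_left _
          (Finset.mem_filter.mpr ⟨hW', hlow, h⟩))
      · rcases le_or_gt (w + x k) (α0 + T + T) with h' | h'
        · exact Finset.mem_union_left _ (Finset.mem_union_right _
            (Finset.mem_filter.mpr ⟨hW', h, h'⟩))
        · exact Finset.mem_union_right _ (Finset.mem_filter.mpr ⟨hW', h', hup⟩)
    have hGcard : (B \ A).card ≤ 3 * MnF l x T (n + 1) := by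
      refine le_trans (Finset.card_le_card hBsub) (le_trans Finset.card_image_le ?_)
      refine le_trans (Finset.card_union_le _ _) ?_
      have h12 := Finset.card_union_le
        ((Wbox l x (n+1)).filter fun w => α0 < w ∧ w ≤ α0 + T)
        ((Wbox l x (n+1)).filter fun w => α0 + T < w ∧ w ≤ α0 + T + T)
      have c1 : ((Wbox l x (n+1)).filter fun w => α0 < w ∧ w ≤ α0 + T).card
          ≤ MnF l x T (n+1) := cntF_le_MnF l x T (n+1) α0
      have c2 : ((Wbox l x (n+1)).filter fun w => α0 + T < w ∧ w ≤ α0 + T + T).card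
          ≤ MnF l x T (n+1) := cntF_le_MnF l x T (n+1) (α0 + T)
      have c3 : ((Wbox l x (n+1)).filter fun w => α0 + T + T < w ∧ w ≤ α0 + T + T + T).card
          ≤ MnF l x T (n+1) := cntF_le_MnF l x T (n+1) (α0 + T + T)
      omega
    have hacard : A.card ≤ V.card := Finset.card_le_card hAV
    have hsum1 : ((V \ A).card : ℝ) * (3 * ε * (∑ k, m k)) ≤
        ∑ z ∈ V \ A, ∑ k : Fin l, (if z + x k ∈ A then m k else 0) := by
      have h := Finset.card_nsmul_le_sum (V \ A)
        (fun z => ∑ k : Fin l, (if z + x k ∈ A then m k else 0))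
        (3 * ε * (∑ k, m k)) ?_
      · simpa [nsmul_eq_mul] using h
      · intro z hz
        exact hAout z (Finset.mem_sdiff.mp hz).1 (Finset.mem_sdiff.mp hz).2
    have hsum2 : ∑ z ∈ V \ A, ∑ k : Fin l, (if z + x k ∈ A then m k else 0)
        ≤ (∑ k, m k) * A.card := by
      rw [Finset.sum_comm]
      calc ∑ k : Fin l, ∑ z ∈ V \ A, (if z + x k ∈ A then m k else 0)
          ≤ ∑ k : Fin l, m k * A.card := by
            refine Finset.sum_le_sum fun k _ => ?_
            rw [← Finset.sum_filter, Finset.sum_const]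
            have hcard : ((V \ A).filter fun z => z + x k ∈ A).card ≤ A.card := by
              refine Finset.card_le_card_of_injOn (fun z => z + x k) ?_ ?_
              · intro z hz; exact (Finset.mem_filter.mp hz).2
              · exact Function.Injective.injOn (add_left_injective (x k))
            calc (((V \ A).filter fun z => z + x k ∈ A).card) • m k
                = (((V \ A).filter fun z => z + x k ∈ A).card : ℝ) * m k :=
                  nsmul_eq_mul _ _
              _ ≤ (A.card : ℝ) * m k :=
                  mul_le_mul_of_nonneg_right (by exact_mod_cast hcard) (hm k).le
              _ = m k * A.card := mul_comm _ _
        _ = (∑ k, m k) * A.card := by rw [Finset.sum_mul]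
    have hcomb : 3 * ε * (∑ k, m k) * ((MnF l x T n : ℝ) - A.card)
        ≤ (∑ k, m k) * A.card := by
      have hcasd : ((V \ A).card : ℝ) = (MnF l x T n : ℝ) - A.card := by
        rw [Finset.card_sdiff_of_subset hAV, Nat.cast_sub hacard, hVcard]
      calc 3 * ε * (∑ k, m k) * ((MnF l x T n : ℝ) - A.card)
          = ((V \ A).card : ℝ) * (3 * ε * (∑ k, m k)) := by rw [hcasd]; ring
        _ ≤ _ := hsum1
        _ ≤ _ := hsum2
    have hNr1 : (1 : ℝ) ≤ (MnF l x T n : ℝ) := by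
      exact_mod_cast one_le_MnF l x T hT0 n
    have h1' : 3 * ε * ((MnF l x T n : ℝ) - A.card) ≤ (A.card : ℝ) := by
      nlinarith [hcomb, hS0]
    have hapos : 0 < (A.card : ℝ) := by
      rcases lt_or_ge 0 (A.card : ℝ) with h | h
      · exact h
      · exfalso; nlinarith [h1', hε, hNr1, h]
    have hGR : ((B \ A).card : ℝ) ≤ 3 * (MnF l x T (n+1) : ℝ) := by
      exact_mod_cast hGcard
    have h2N : (MnF l x T (n+1) : ℝ) + 1 ≤ 2 * (MnF l x T n : ℝ) := by
      exact_mod_cast hgood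
    have hs2 : 3 * ε * (MnF l x T n : ℝ) < 2 * (A.card : ℝ) := by
      nlinarith [h1', hapos, mul_pos (show (0:ℝ) < 1 - 3 * ε by linarith) hapos]
    have hmul1 : ε * ((B \ A).card : ℝ) ≤ ε * (3 * (MnF l x T (n+1) : ℝ)) :=
      mul_le_mul_of_nonneg_left hGR hε.le
    have hmul2 : ε * ((MnF l x T (n+1) : ℝ) + 1) ≤ ε * (2 * (MnF l x T n : ℝ)) :=
      mul_le_mul_of_nonneg_left h2N hε.le
    have hgoal : ε * ((B \ A).card : ℝ) / 4 < (A.card : ℝ) := by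
      nlinarith [hmul1, hmul2, hs2, hε]
    exact hgoal
  · intro z hz
    have hzA : z ∈ A := hz
    have hloss := hAin z hzA
    have hrw : ∀ k : Fin l, m k * Set.indicator (↑(B \ A) : Set ℝ) 1 (z + x k)
        = m k - (if z + x k ∈ A then m k else 0) := by
      intro k
      have hinB : z + x k ∈ B :=
        Finset.mem_biUnion.mpr ⟨k, Finset.mem_univ k, Finset.mem_image_of_mem _ hzA⟩
      by_cases hA' : z + x k ∈ A
      · have hnot : (z + x k) ∉ (↑(B \ A) : Set ℝ) := by
          rw [Finset.mem_coe, Finset.mem_sdiff]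
          rintro ⟨-, h⟩; exact h hA'
        rw [Set.indicator_of_notMem hnot]
        simp [hA']
      · have hmem : (z + x k) ∈ (↑(B \ A) : Set ℝ) := by
          rw [Finset.mem_coe, Finset.mem_sdiff]
          exact ⟨hinB, hA'⟩
        rw [Set.indicator_of_mem hmem]
        simp [hA']
    calc (1 - 3 * ε) * ∑ k, m k
        < ∑ k, m k - ∑ k : Fin l, (if z + x k ∈ A then m k else 0) := by linarith
      _ = ∑ k : Fin l, (m k - if z + x k ∈ A then m k else 0) :=
          (Finset.sum_sub_distrib _ _).symm
      _ = ∑ k, m k * Set.indicator (↑(B \ A) : Set ℝ) 1 (z + x k) :=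
          Finset.sum_congr rfl fun k _ => (hrw k).symm
end

section
/- Let $E_1, G_1, \ldots, E_m, G_m$ be finite sets of nonzero reals with $E_k \cap G_k = \varnothing$ for each $k$, and suppose the sets $A_k = E_k \cup G_k$ satisfy $\max A_{k+1} \le \frac14 d(A_k)$ for $1 \le k < m$ (where $d$ is the minimal-gap function, with $d(\{x\}) = |x|$). Define $F_k = \sum_{i \ne k} G_i + E_k$ (the sumset of $E_k$ with all $G_i$, $i \ne k$). Then the sets $F_1, \ldots, F_m$ are pairwise disjoint. -/
lemma absSet_eq (A : Finset ℝ) :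
    {r : ℝ | ∃ x ∈ A, r = |x|} = ↑(A.image fun x => |x|) := by
  ext r; simp [eq_comm]

lemma abs_le_maxAbs {A : Finset ℝ} {x : ℝ} (hx : x ∈ A) : |x| ≤ maxAbs A := by
  apply le_csSup
  · rw [absSet_eq]; exact (A.image fun x => |x|).finite_toSet.bddAbove
  · exact ⟨x, hx, rfl⟩

lemma dGap_le_s14 {A : Finset ℝ} {x y : ℝ} (hx : x ∈ A) (hy : y ∈ A) (hxy : x ≠ y) :
    dGap A ≤ |x - y| := by
  have hcard : 2 ≤ A.card := Finset.one_lt_card.mpr ⟨x, hx, y, hy, hxy⟩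
  rw [dGap, if_pos hcard]
  apply csInf_le
  · exact ⟨0, by rintro r ⟨a, -, b, -, -, rfl⟩; exact abs_nonneg _⟩
  · exact ⟨x, hx, y, hy, hxy, rfl⟩

lemma dGap_le_two_mul_maxAbs {A : Finset ℝ} (hA : A.Nonempty) :
    dGap A ≤ 2 * maxAbs A := by
  by_cases hcard : 2 ≤ A.card
  · obtain ⟨x, hx, y, hy, hxy⟩ := Finset.one_lt_card.mp hcard
    calc dGap A ≤ |x - y| := dGap_le_s14 hx hy hxy
    _ ≤ |x| + |y| := abs_sub _ _
    _ ≤ maxAbs A + maxAbs A := add_le_add (abs_le_maxAbs hx) (abs_le_maxAbs hy)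
    _ = 2 * maxAbs A := by ring
  · obtain ⟨x, hx⟩ := hA
    rw [dGap, if_neg hcard]
    have h1 : sInf {r : ℝ | ∃ x ∈ A, r = |x|} ≤ |x| := by
      apply csInf_le
      · exact ⟨0, by rintro r ⟨a, -, rfl⟩; exact abs_nonneg _⟩
      · exact ⟨x, hx, rfl⟩
    have h2 : |x| ≤ maxAbs A := abs_le_maxAbs hx
    have h3 : (0 : ℝ) ≤ maxAbs A := le_trans (abs_nonneg x) h2
    linarith

theorem stmt14 (m : ℕ) (E G : Fin m → Finset ℝ)
    (hE0 : ∀ k, ∀ a ∈ E k, a ≠ 0) (hG0 : ∀ k, ∀ a ∈ G k, a ≠ 0)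
    (hdisj : ∀ k, Disjoint (E k) (G k))
    (hmax : ∀ k : Fin m, ∀ h : (k : ℕ) + 1 < m,
      maxAbs (E ⟨(k : ℕ) + 1, h⟩ ∪ G ⟨(k : ℕ) + 1, h⟩) ≤ dGap (E k ∪ G k) / 4) :
    (Set.univ : Set (Fin m)).Pairwise fun k j => Disjoint
      {z : ℝ | ∃ g : Fin m → ℝ, (∀ i, i ≠ k → g i ∈ G i) ∧ g k ∈ E k ∧ z = ∑ i, g i}
      {z : ℝ | ∃ g : Fin m → ℝ, (∀ i, i ≠ j → g i ∈ G i) ∧ g j ∈ E j ∧ z = ∑ i, g i} := by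
  intro k _ j _ hkj
  rw [Set.disjoint_left]
  rintro z ⟨g, hg, hgk, rfl⟩ ⟨h, hh, hhj, hz⟩
  set A : Fin m → Finset ℝ := fun i => E i ∪ G i with hA
  set M : Fin m → ℝ := fun i => maxAbs (A i) with hM
  have hmemg : ∀ i, g i ∈ A i := by
    intro i
    by_cases hik : i = k
    · subst hik; exact Finset.mem_union_left _ hgk
    · exact Finset.mem_union_right _ (hg i hik)
  have hmemh : ∀ i, h i ∈ A i := by
    intro i
    by_cases hij : i = j
    · subst hij; exact Finset.mem_union_left _ hhj
    · exact Finset.mem_union_right _ (hh i hij)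
  have hAne : ∀ i, (A i).Nonempty := fun i => ⟨g i, hmemg i⟩
  have hA0 : ∀ i, ∀ a ∈ A i, a ≠ 0 := by
    intro i a ha
    rcases Finset.mem_union.mp ha with ha | ha
    · exact hE0 i a ha
    · exact hG0 i a ha
  have hMpos : ∀ i, 0 < M i := by
    intro i
    have h1 : |g i| ≤ M i := abs_le_maxAbs (hmemg i)
    have h2 : 0 < |g i| := abs_pos.mpr (hA0 i _ (hmemg i))
    linarith
  have hMhalf : ∀ n : ℕ, ∀ hn : n < m, ∀ hn1 : n + 1 < m,
      M ⟨n + 1, hn1⟩ ≤ M ⟨n, hn⟩ / 2 := by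
    intro n hn hn1
    have h1 := hmax ⟨n, hn⟩ hn1
    have h2 := dGap_le_two_mul_maxAbs (hAne ⟨n, hn⟩)
    simp only [hM, hA] at *
    linarith
  -- geometric bound
  have geom : ∀ d n : ℕ, ∀ hn : n < m, m = n + d + 1 →
      ∑ i ∈ Finset.Ici (⟨n, hn⟩ : Fin m), M i < 2 * M ⟨n, hn⟩ := by
    intro d
    induction d with
    | zero =>
      intro n hn hm
      have hIci : Finset.Ici (⟨n, hn⟩ : Fin m) = {⟨n, hn⟩} := by
        ext i
        simp only [Finset.mem_Ici, Finset.mem_singleton, Fin.le_def, Fin.ext_iff]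
        have := i.isLt
        omega
      rw [hIci, Finset.sum_singleton]
      have := hMpos ⟨n, hn⟩
      linarith
    | succ d ih =>
      intro n hn hm
      have hn1 : n + 1 < m := by omega
      have hIci : Finset.Ici (⟨n, hn⟩ : Fin m)
          = insert ⟨n, hn⟩ (Finset.Ici (⟨n + 1, hn1⟩ : Fin m)) := by
        ext i
        simp only [Finset.mem_Ici, Finset.mem_insert, Fin.le_def, Fin.ext_iff]
        omega
      have hnot : (⟨n, hn⟩ : Fin m) ∉ Finset.Ici (⟨n + 1, hn1⟩ : Fin m) := by
        simp only [Finset.mem_Ici, Fin.le_def]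
        omega
      rw [hIci, Finset.sum_insert hnot]
      have h1 := ih (n + 1) hn1 (by omega)
      have h2 := hMhalf n hn hn1
      linarith
  -- g k ≠ h k
  have hgne : g k ≠ h k := by
    intro e
    have hhk : h k ∈ G k := hh k hkj
    exact Finset.disjoint_left.mp (hdisj k) hgk (e ▸ hhk)
  -- minimal index where g ≠ h
  have hS : (Finset.univ.filter (fun i => g i ≠ h i)).Nonempty := ⟨k, by simp [hgne]⟩
  obtain ⟨t, htS, htmin'⟩ : ∃ t ∈ Finset.univ.filter (fun i => g i ≠ h i),
      ∀ i ∈ Finset.univ.filter (fun i => g i ≠ h i), t ≤ i :=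
    ⟨_, Finset.min'_mem _ hS, fun i hi => Finset.min'_le _ i hi⟩
  have ht : g t ≠ h t := (Finset.mem_filter.mp htS).2
  have htmin : ∀ i, i < t → g i = h i := by
    intro i hi
    by_contra hne
    exact absurd (htmin' i (by simp [hne])) (not_le.mpr hi)
  -- sum splitting
  have hsplit : g t - h t = ∑ i ∈ Finset.Ioi t, (h i - g i) := by
    have hzero : ∑ i, (g i - h i) = 0 := by
      rw [Finset.sum_sub_distrib, hz, sub_self]
    have huniv : (Finset.univ : Finset (Fin m)) = Finset.Iio t ∪ Finset.Ici t := by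
      ext i
      simp only [Finset.mem_univ, Finset.mem_union, Finset.mem_Iio, Finset.mem_Ici, true_iff]
      exact lt_or_ge i t
    have hd : Disjoint (Finset.Iio t) (Finset.Ici t) := by
      rw [Finset.disjoint_left]
      intro a ha hb
      rw [Finset.mem_Iio] at ha
      rw [Finset.mem_Ici] at hb
      exact absurd hb (not_le.mpr ha)
    have h1 : ∑ i ∈ Finset.Iio t, (g i - h i) = 0 := by
      apply Finset.sum_eq_zero
      intro i hi
      rw [Finset.mem_Iio] at hi
      rw [htmin i hi, sub_self]
    have h2 : ∑ i ∈ Finset.Ici t, (g i - h i)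
        = (g t - h t) + ∑ i ∈ Finset.Ioi t, (g i - h i) := by
      rw [Finset.Ici_eq_cons_Ioi, Finset.sum_cons]
    have h3 : ∑ i, (g i - h i)
        = ∑ i ∈ Finset.Iio t, (g i - h i) + ∑ i ∈ Finset.Ici t, (g i - h i) := by
      rw [huniv, Finset.sum_union hd]
    rw [h3, h1, h2] at hzero
    have h4 : ∑ i ∈ Finset.Ioi t, (h i - g i) = - ∑ i ∈ Finset.Ioi t, (g i - h i) := by
      rw [← Finset.sum_neg_distrib]
      apply Finset.sum_congr rfl
      intro i _
      ring
    rw [h4]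
    linarith
  -- t is not the last index
  by_cases ht1 : (t : ℕ) + 1 < m
  · set t' : Fin m := ⟨(t : ℕ) + 1, ht1⟩ with ht'def
    have hIoi : Finset.Ioi t = Finset.Ici t' := by
      ext i
      simp only [Finset.mem_Ioi, Finset.mem_Ici, Fin.lt_def, Fin.le_def, ht'def]
      omega
    have hbound : |g t - h t| ≤ 2 * ∑ i ∈ Finset.Ici t', M i := by
      rw [hsplit, hIoi, Finset.mul_sum]
      calc |∑ i ∈ Finset.Ici t', (h i - g i)|
          ≤ ∑ i ∈ Finset.Ici t', |h i - g i| := Finset.abs_sum_le_sum_abs _ _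
        _ ≤ ∑ i ∈ Finset.Ici t', 2 * M i := by
            apply Finset.sum_le_sum
            intro i _
            have h1 : |h i| ≤ M i := abs_le_maxAbs (hmemh i)
            have h2 : |g i| ≤ M i := abs_le_maxAbs (hmemg i)
            calc |h i - g i| ≤ |h i| + |g i| := abs_sub _ _
              _ ≤ 2 * M i := by linarith
    have hgeo : ∑ i ∈ Finset.Ici t', M i < 2 * M t' := by
      have := geom (m - (t : ℕ) - 2) ((t : ℕ) + 1) ht1 (by omega)
      exact this
    have hdle : dGap (A t) ≤ |g t - h t| := dGap_le_s14 (hmemg t) (hmemh t) ht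
    have hstep : 4 * M t' ≤ dGap (A t) := by
      have := hmax t ht1
      simp only [hM, hA, ht'def] at *
      have hteq : (⟨(t : ℕ), t.isLt⟩ : Fin m) = t := rfl
      linarith [this]
    linarith
  · -- Ioi t is empty
    have hIoi : Finset.Ioi t = ∅ := by
      ext i
      simp only [Finset.mem_Ioi, Finset.notMem_empty, iff_false, Fin.lt_def]
      have := i.isLt
      omega
    rw [hIoi, Finset.sum_empty] at hsplit
    exact ht (by linarith)
end
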